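/- Let f : [1, +∞) → ℝ be a C²-smooth function with f(x) > 0, f''(x) > 0 and f'(x) < 0 for all x ≥ 1, and such that f(x) → 0 and f'(x) → 0 as x → +∞. Then the improper integral ∫₁^{+∞} (f''(x))^{2/3} (1 + f'(x)²)^{−1/2} dx converges; i.e. the Lazutkin length of the strictly convex curve {y = f(x), x ≥ 1} is finite. -/

import Mathlib

open Set Filter MeasureTheory

private lemma aux_young (a x : ℝ) (ha : 0 ≤ a) (hx : (1:ℝ) ≤ x) :
    a ^ ((2:ℝ)/3) ≤ a * x + x ^ (-2:ℝ) := by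
  have hx0 : (0:ℝ) < x := by linarith
  set t := a * x with htdef
  set u := x ^ (-2:ℝ) with hudef
  have ht : 0 ≤ t := mul_nonneg ha hx0.le
  have hu : 0 < u := Real.rpow_pos_of_pos hx0 _
  have hm : 0 < max t u := lt_of_lt_of_le hu (le_max_right _ _)
  have key : a ^ ((2:ℝ)/3) = t ^ ((2:ℝ)/3) * u ^ ((1:ℝ)/3) := by
    rw [htdef, hudef, Real.mul_rpow ha hx0.le, ← Real.rpow_mul hx0.le, mul_assoc,
      ← Real.rpow_add hx0]
    norm_num
  rw [key]
  calc t ^ ((2:ℝ)/3) * u ^ ((1:ℝ)/3)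
      ≤ (max t u) ^ ((2:ℝ)/3) * (max t u) ^ ((1:ℝ)/3) := by
        apply mul_le_mul (Real.rpow_le_rpow ht (le_max_left _ _) (by norm_num))
          (Real.rpow_le_rpow hu.le (le_max_right _ _) (by norm_num))
          (Real.rpow_nonneg hu.le _) (Real.rpow_nonneg hm.le _)
    _ = max t u := by
        rw [← Real.rpow_add hm]; norm_num
    _ ≤ t + u := max_le (by linarith) (by linarith)

/-- Let `f : [1,∞) → ℝ` be `C²` with `f > 0`, `f'' > 0`, `f' < 0` on
`[1,∞)` and `f(x) → 0`, `f'(x) → 0` as `x → +∞`. Then the Lazutkin length of the curve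
`{y = f(x), x ≥ 1}`, namely `∫₁^∞ (f''(x))^{2/3} (1 + f'(x)²)^{−1/2} dx`, is finite.
(Here `f' = derivWithin f [1,∞)` and `f'' = derivWithin f' [1,∞)`.) -/
theorem statement16 (f : ℝ → ℝ)
    (hf : ContDiffOn ℝ 2 f (Set.Ici 1))
    (hfpos : ∀ x ∈ Set.Ici (1:ℝ), 0 < f x)
    (hf''pos : ∀ x ∈ Set.Ici (1:ℝ),
      0 < derivWithin (derivWithin f (Set.Ici 1)) (Set.Ici 1) x)
    (hf'neg : ∀ x ∈ Set.Ici (1:ℝ), derivWithin f (Set.Ici 1) x < 0)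
    (hlim : Tendsto f atTop (nhds 0))
    (hlim' : Tendsto (derivWithin f (Set.Ici 1)) atTop (nhds 0)) :
    IntegrableOn
      (fun x => (derivWithin (derivWithin f (Set.Ici 1)) (Set.Ici 1) x) ^ ((2:ℝ)/3) *
        (1 + (derivWithin f (Set.Ici 1) x) ^ 2) ^ (-(1:ℝ)/2))
      (Set.Ici 1) := by
  set g := derivWithin f (Set.Ici 1) with hgdef
  set g' := derivWithin g (Set.Ici 1) with hg'def
  have huniq : UniqueDiffOn ℝ (Set.Ici (1:ℝ)) := uniqueDiffOn_Ici 1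
  have hg1 : ContDiffOn ℝ 1 g (Set.Ici 1) := hf.derivWithin huniq (by norm_num)
  have hgc : ContinuousOn g (Set.Ici 1) := hg1.continuousOn
  have hg'c : ContinuousOn g' (Set.Ici 1) := hg1.continuousOn_derivWithin huniq le_rfl
  have hfc : ContinuousOn f (Set.Ici 1) := hf.continuousOn
  -- the auxiliary function H = g·x − f is an antiderivative of g'·x on [1,∞)
  set H : ℝ → ℝ := fun x => g x * x - f x with hHdef
  have hHc : ContinuousOn H (Set.Ici 1) := (hgc.mul continuousOn_id).sub hfc
  have hder : ∀ x ∈ Set.Ici (1:ℝ), HasDerivWithinAt H (g' x * x) (Set.Ici 1) x := by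
    intro x hx
    have h1 : HasDerivWithinAt g (g' x) (Set.Ici 1) x :=
      ((hg1.differentiableOn one_ne_zero) x hx).hasDerivWithinAt
    have h2 : HasDerivWithinAt f (g x) (Set.Ici 1) x :=
      ((hf.differentiableOn (by norm_num)) x hx).hasDerivWithinAt
    rw [hHdef]
    have : HasDerivWithinAt (fun y => g y * y - f y) (g' x * x + g x * 1 - g x) (Set.Ici 1) x :=
      (h1.mul (hasDerivWithinAt_id x (Set.Ici 1))).sub h2
    convert this using 1
    simp [id]
  -- h := g'·x is continuous and nonnegative on [1,∞)
  set h : ℝ → ℝ := fun x => g' x * x with hhdef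
  have hhc : ContinuousOn h (Set.Ici 1) := hg'c.mul continuousOn_id
  have hhnn : ∀ x ∈ Set.Ici (1:ℝ), 0 ≤ h x := by
    intro x hx
    exact mul_nonneg (hf''pos x hx).le (le_trans zero_le_one hx)
  -- h is integrable on Ioi 1 with uniformly bounded integrals
  have hIntIoi : IntegrableOn h (Set.Ioi 1) := by
    apply integrableOn_Ioi_of_intervalIntegral_norm_bounded (f 1 - g 1) 1
      (b := fun i : ℝ => i) (l := atTop) ?_ tendsto_id
    · filter_upwards [eventually_ge_atTop (1:ℝ)] with i hi
      have hIcc : Set.Icc (1:ℝ) i ⊆ Set.Ici 1 := Set.Icc_subset_Ici_self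
      have hInti : IntervalIntegrable h volume 1 i :=
        (intervalIntegrable_iff_integrableOn_Icc_of_le hi).mpr
          ((hhc.mono hIcc).integrableOn_compact isCompact_Icc)
      have hnorm : (∫ x in (1:ℝ)..i, ‖h x‖) = ∫ x in (1:ℝ)..i, h x := by
        apply intervalIntegral.integral_congr
        intro x hx
        rw [Set.uIcc_of_le hi] at hx
        exact Real.norm_of_nonneg (hhnn x (hIcc hx))
      have hftc : (∫ x in (1:ℝ)..i, h x) = H i - H 1 := by
        apply intervalIntegral.integral_eq_sub_of_hasDeriv_right_of_le hi
          (hHc.mono hIcc) ?_ hInti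
        intro x hx
        have hx1 : x ∈ Set.Ici (1:ℝ) := le_of_lt hx.1
        exact (hder x hx1).mono (fun y hy => show (1:ℝ) ≤ y from le_of_lt (lt_of_le_of_lt hx1 hy))
      rw [hnorm, hftc]
      have h1 : g i * i ≤ 0 :=
        mul_nonpos_of_nonpos_of_nonneg (hf'neg i hi).le (by linarith)
      have h2 : 0 < f i := hfpos i hi
      simp only [hHdef]
      nlinarith
    · intro i
      rcases le_or_gt 1 i with hi | hi
      · have hIcc : Set.Icc (1:ℝ) i ⊆ Set.Ici 1 := Set.Icc_subset_Ici_self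
        exact ((hhc.mono hIcc).integrableOn_compact isCompact_Icc).mono_set
          Set.Ioc_subset_Icc_self
      · simp [Set.Ioc_eq_empty (by linarith : ¬ (1:ℝ) < i)]
  have hInt : IntegrableOn h (Set.Ici 1) := (integrableOn_Ici_iff_integrableOn_Ioi (f := h) (b := 1)).mpr hIntIoi
  -- x ↦ x^(-2) is integrable on [1,∞)
  have hrpow : IntegrableOn (fun x : ℝ => x ^ (-2:ℝ)) (Set.Ici 1) :=
    (integrableOn_Ici_iff_integrableOn_Ioi (f := fun x : ℝ => x ^ (-2:ℝ)) (b := 1)).mpr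
      (integrableOn_Ioi_rpow_of_lt (by norm_num) one_pos)
  have hbound : Integrable (fun x => h x + x ^ (-2:ℝ)) (volume.restrict (Set.Ici 1)) :=
    hInt.add hrpow
  -- the integrand is continuous on [1,∞)
  have hFc : ContinuousOn
      (fun x => g' x ^ ((2:ℝ)/3) * (1 + g x ^ 2) ^ (-(1:ℝ)/2)) (Set.Ici 1) := by
    apply ContinuousOn.mul
    · exact hg'c.rpow_const (fun x hx => Or.inl (hf''pos x hx).ne')
    · exact (continuousOn_const.add (hgc.pow 2)).rpow_const
        (fun x hx => Or.inl (by positivity : (0:ℝ) < 1 + g x ^ 2).ne')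
  apply hbound.mono' (hFc.aestronglyMeasurable measurableSet_Ici)
  rw [ae_restrict_iff' measurableSet_Ici]
  filter_upwards with x hx
  have hg'0 : 0 < g' x := hf''pos x hx
  have hsq : (0:ℝ) < 1 + g x ^ 2 := by positivity
  have hF0 : 0 ≤ g' x ^ ((2:ℝ)/3) * (1 + g x ^ 2) ^ (-(1:ℝ)/2) := by positivity
  rw [Real.norm_of_nonneg hF0]
  have h1 : (1 + g x ^ 2) ^ (-(1:ℝ)/2) ≤ 1 :=
    Real.rpow_le_one_of_one_le_of_nonpos (by nlinarith) (by norm_num)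
  calc g' x ^ ((2:ℝ)/3) * (1 + g x ^ 2) ^ (-(1:ℝ)/2)
      ≤ g' x ^ ((2:ℝ)/3) * 1 :=
        mul_le_mul_of_nonneg_left h1 (Real.rpow_nonneg hg'0.le _)
    _ = g' x ^ ((2:ℝ)/3) := mul_one _
    _ ≤ g' x * x + x ^ (-2:ℝ) := aux_young _ _ hg'0.le hx
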